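/- Let I₀ ⊂ ℕ be the set of all numbers of the form 1 + ∑_{n∈ℕ} a_n ⌊2^{n/δ}⌋ with a_n ∈ {0,1} and finitely many a_n = 1, where 0 < δ < 1. Then there exist constants such that for all y ∈ I₀ and all real r ≥ 1, the count #(I₀ ∩ [y−r, y+r]) is comparable to r^δ (bounded above and below by constant multiples of r^δ). -/

import Mathlib

open Real Set

/-- The set of all 1 + ∑_n a_n ⌊2^{n/δ}⌋ with a_n ∈ {0,1}, finitely many 1s. -/
noncomputable def I0 (δ : ℝ) : Set ℕ :=
  {m : ℕ | ∃ s : Finset ℕ, m = 1 + ∑ n ∈ s, (⌊(2 : ℝ) ^ ((n : ℝ) / δ)⌋).toNat}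


noncomputable def xx (δ : ℝ) : ℝ := (2:ℝ) ^ (1/δ)
noncomputable def bb (δ : ℝ) (n : ℕ) : ℕ := (⌊(2 : ℝ) ^ ((n : ℝ) / δ)⌋).toNat

lemma two_lt_xx {δ : ℝ} (hδ0 : 0 < δ) (hδ1 : δ < 1) : 2 < xx δ := by
  have h1 : (1:ℝ) < 1/δ := by rw [lt_div_iff₀ hδ0]; linarith
  have h2 : (2:ℝ)^(1:ℝ) < (2:ℝ)^(1/δ) :=
    (Real.rpow_lt_rpow_left_iff (x := 2) (by norm_num)).2 h1
  simpa [xx] using h2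

lemma rpow_eq_xx {δ : ℝ} (hδ0 : 0 < δ) (n : ℕ) :
    (2:ℝ) ^ ((n : ℝ) / δ) = (xx δ) ^ n := by
  rw [xx, ← Real.rpow_natCast ((2:ℝ) ^ (1/δ)) n, ← Real.rpow_mul (by norm_num)]
  congr 1; ring

lemma one_le_xx_pow {δ : ℝ} (hδ0 : 0 < δ) (hδ1 : δ < 1) (n : ℕ) : 1 ≤ (xx δ) ^ n :=
  one_le_pow₀ (by linarith [two_lt_xx hδ0 hδ1])

lemma bb_cast {δ : ℝ} (hδ0 : 0 < δ) (hδ1 : δ < 1) (n : ℕ) :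
    (bb δ n : ℝ) = (⌊(xx δ) ^ n⌋ : ℤ) := by
  have h1 : (1:ℤ) ≤ ⌊(xx δ) ^ n⌋ := by
    exact_mod_cast Int.le_floor.2 (by exact_mod_cast one_le_xx_pow hδ0 hδ1 n)
  rw [bb, rpow_eq_xx hδ0]
  rw [show ((⌊(xx δ) ^ n⌋.toNat : ℕ) : ℝ) = ((⌊(xx δ) ^ n⌋.toNat : ℤ) : ℝ) by push_cast; ring,
    Int.toNat_of_nonneg (by linarith)]

lemma bb_le {δ : ℝ} (hδ0 : 0 < δ) (hδ1 : δ < 1) (n : ℕ) : (bb δ n : ℝ) ≤ (xx δ) ^ n := by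
  rw [bb_cast hδ0 hδ1]; exact Int.floor_le _

lemma lt_bb {δ : ℝ} (hδ0 : 0 < δ) (hδ1 : δ < 1) (n : ℕ) : (xx δ) ^ n - 1 < (bb δ n : ℝ) := by
  rw [bb_cast hδ0 hδ1]; exact Int.sub_one_lt_floor _

lemma sum_bb_le {δ : ℝ} (hδ0 : 0 < δ) (hδ1 : δ < 1) (n : ℕ) :
    ∑ k ∈ Finset.range n, (bb δ k : ℝ) ≤ ((xx δ) ^ n - 1) / (xx δ - 1) := by
  have hx := two_lt_xx hδ0 hδ1
  calc ∑ k ∈ Finset.range n, (bb δ k : ℝ) ≤ ∑ k ∈ Finset.range n, (xx δ) ^ k :=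
        Finset.sum_le_sum fun k _ => bb_le hδ0 hδ1 k
    _ = ((xx δ) ^ n - 1) / (xx δ - 1) := geom_sum_eq (by linarith) n

lemma sum_bb_le' {δ : ℝ} (hδ0 : 0 < δ) (hδ1 : δ < 1) (n : ℕ) :
    ∑ k ∈ Finset.range n, (bb δ k : ℝ) ≤ (xx δ) ^ n - 1 := by
  have hx := two_lt_xx hδ0 hδ1
  refine (sum_bb_le hδ0 hδ1 n).trans (div_le_self ?_ (by linarith))
  linarith [one_le_xx_pow hδ0 hδ1 n]

lemma sum_bb_lt_bb {δ : ℝ} (hδ0 : 0 < δ) (hδ1 : δ < 1) (n : ℕ) :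
    ∑ k ∈ Finset.range n, bb δ k < bb δ n := by
  have h := (sum_bb_le' hδ0 hδ1 n).trans_lt (lt_bb hδ0 hδ1 n)
  have h2 : ((∑ k ∈ Finset.range n, bb δ k : ℕ) : ℝ) < ((bb δ n : ℕ) : ℝ) := by push_cast; exact h
  exact_mod_cast h2

-- key comparison lemma
lemma key_lemma (δ : ℝ) (s t : Finset ℕ) (n : ℕ) (hns : n ∈ s) (hnt : n ∉ t)
    (h : ∀ m, n < m → (m ∈ s ↔ m ∈ t)) :
    ∑ k ∈ t, bb δ k + bb δ n ≤ ∑ k ∈ s, bb δ k + ∑ k ∈ Finset.range n, bb δ k := by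
  classical
  have hs := (Finset.sum_filter_add_sum_filter_not s (fun m => n < m) (bb δ)).symm
  have ht := (Finset.sum_filter_add_sum_filter_not t (fun m => n < m) (bb δ)).symm
  have heq : s.filter (fun m => n < m) = t.filter (fun m => n < m) := by
    ext m
    simp only [Finset.mem_filter]
    constructor
    · rintro ⟨hm, hm'⟩; exact ⟨(h m hm').1 hm, hm'⟩
    · rintro ⟨hm, hm'⟩; exact ⟨(h m hm').2 hm, hm'⟩
  have h1 : ∑ k ∈ t.filter (fun m => ¬ n < m), bb δ k ≤ ∑ k ∈ Finset.range n, bb δ k := by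
    apply Finset.sum_le_sum_of_subset
    intro m hm
    simp only [Finset.mem_filter, not_lt] at hm
    rcases hm with ⟨hmt, hmn⟩
    rcases lt_or_eq_of_le hmn with h' | h'
    · exact Finset.mem_range.2 h'
    · exact absurd (h' ▸ hmt) hnt
  have h2 : bb δ n ≤ ∑ k ∈ s.filter (fun m => ¬ n < m), bb δ k := by
    apply Finset.single_le_sum (f := bb δ) (fun i _ => Nat.zero_le _)
    simp [Finset.mem_filter, hns]
  rw [heq] at hs
  omega
-- injectivity of subset sums
lemma sum_inj {δ : ℝ} (hδ0 : 0 < δ) (hδ1 : δ < 1) {s t : Finset ℕ}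
    (h : ∑ k ∈ s, bb δ k = ∑ k ∈ t, bb δ k) : s = t := by
  classical
  by_contra hne
  set u := (s \ t) ∪ (t \ s) with hu
  have hune : u.Nonempty := by
    have h1 : ¬ ∀ a, a ∈ s ↔ a ∈ t := fun hh => hne (Finset.ext hh)
    push_neg at h1
    obtain ⟨a, ha⟩ := h1
    refine ⟨a, ?_⟩
    rw [hu]
    simp only [Finset.mem_union, Finset.mem_sdiff]
    tauto
  set n := u.max' hune with hn
  have hnu : n ∈ u := u.max'_mem hune
  have hhigh : ∀ m, n < m → (m ∈ s ↔ m ∈ t) := by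
    intro m hm
    have hmu : m ∉ u := fun hmu => absurd (u.le_max' m hmu) (not_le.2 hm)
    rw [hu] at hmu
    simp only [Finset.mem_union, Finset.mem_sdiff, not_or, not_and, not_not] at hmu
    constructor
    · exact hmu.1
    · exact hmu.2
  have hsuper := sum_bb_lt_bb hδ0 hδ1 n
  rw [hu] at hnu
  rcases Finset.mem_union.1 hnu with hns | hnt
  · obtain ⟨h1, h2⟩ := Finset.mem_sdiff.1 hns
    have := key_lemma δ s t n h1 h2 hhigh
    omega
  · obtain ⟨h1, h2⟩ := Finset.mem_sdiff.1 hnt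
    have := key_lemma δ t s n h1 h2 (fun m hm => (hhigh m hm).symm)
    omega
lemma exists_max_diff {s t : Finset ℕ} (hne : s ≠ t) :
    ∃ n, n ∈ (s \ t) ∪ (t \ s) ∧ ∀ m, n < m → (m ∈ s ↔ m ∈ t) := by
  classical
  set u := (s \ t) ∪ (t \ s) with hu
  have hune : u.Nonempty := by
    have h1 : ¬ ∀ a, a ∈ s ↔ a ∈ t := fun hh => hne (Finset.ext hh)
    push_neg at h1
    obtain ⟨a, ha⟩ := h1
    refine ⟨a, ?_⟩
    rw [hu]
    simp only [Finset.mem_union, Finset.mem_sdiff]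
    tauto
  refine ⟨u.max' hune, u.max'_mem hune, fun m hm => ?_⟩
  have hmu : m ∉ u := fun hmu => absurd (u.le_max' m hmu) (not_le.2 hm)
  rw [hu] at hmu
  simp only [Finset.mem_union, Finset.mem_sdiff, not_or, not_and, not_not] at hmu
  exact ⟨hmu.1, hmu.2⟩

lemma sep_half {δ : ℝ} (hδ0 : 0 < δ) (hδ1 : δ < 1) {s t : Finset ℕ} {n : ℕ}
    (h1 : n ∈ s) (h2 : n ∉ t) (hmax : ∀ m, n < m → (m ∈ s ↔ m ∈ t)) :
    ((xx δ) ^ n - 1) * ((xx δ - 2) / (xx δ - 1)) ≤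
      ((∑ k ∈ s, bb δ k : ℕ) : ℝ) - ((∑ k ∈ t, bb δ k : ℕ) : ℝ) := by
  have hx := two_lt_xx hδ0 hδ1
  have hkey := key_lemma δ s t n h1 h2 hmax
  have hkey' : (∑ k ∈ t, bb δ k : ℝ) + bb δ n ≤
      (∑ k ∈ s, bb δ k : ℝ) + ∑ k ∈ Finset.range n, bb δ k := by exact_mod_cast hkey
  have hb := lt_bb hδ0 hδ1 n
  have hsum := sum_bb_le hδ0 hδ1 n
  have hxn := one_le_xx_pow hδ0 hδ1 n
  have hid : ((xx δ) ^ n - 1) * ((xx δ - 2) / (xx δ - 1)) =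
      ((xx δ) ^ n - 1) - ((xx δ) ^ n - 1) / (xx δ - 1) := by
    have hne : xx δ - 1 ≠ 0 := by linarith
    have h9 : (xx δ - 2) / (xx δ - 1) = 1 - 1 / (xx δ - 1) := by
      rw [eq_sub_iff_add_eq, ← add_div, div_eq_one_iff_eq hne]
      ring
    rw [h9]
    ring
  push_cast at hkey' ⊢
  rw [hid]
  push_cast
  linarith

lemma sep {δ : ℝ} (hδ0 : 0 < δ) (hδ1 : δ < 1) {s t : Finset ℕ} {n : ℕ}
    (hn : n ∈ (s \ t) ∪ (t \ s)) (hmax : ∀ m, n < m → (m ∈ s ↔ m ∈ t)) :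
    ((xx δ) ^ n - 1) * ((xx δ - 2) / (xx δ - 1)) ≤
      |((∑ k ∈ s, bb δ k : ℕ) : ℝ) - ((∑ k ∈ t, bb δ k : ℕ) : ℝ)| := by
  rcases Finset.mem_union.1 hn with h | h
  · obtain ⟨h1, h2⟩ := Finset.mem_sdiff.1 h
    exact (sep_half hδ0 hδ1 h1 h2 hmax).trans (le_abs_self _)
  · obtain ⟨h1, h2⟩ := Finset.mem_sdiff.1 h
    refine (sep_half hδ0 hδ1 h1 h2 (fun m hm => (hmax m hm).symm)).trans ?_
    rw [abs_sub_comm]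
    exact le_abs_self _

lemma two_pow_eq {δ : ℝ} (hδ0 : 0 < δ) (m : ℕ) :
    ((xx δ) ^ m) ^ δ = (2:ℝ) ^ m := by
  rw [← rpow_eq_xx hδ0 m]
  rw [← Real.rpow_mul (by norm_num : (0:ℝ) ≤ 2)]
  rw [div_mul_cancel₀ _ (ne_of_gt hδ0)]
  rw [Real.rpow_natCast]

theorem stmt15 (δ : ℝ) (hδ0 : 0 < δ) (hδ1 : δ < 1) :
    ∃ c C : ℝ, 0 < c ∧ 0 < C ∧ ∀ y ∈ I0 δ, ∀ r : ℝ, 1 ≤ r →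
      c * r ^ δ ≤ ({i ∈ I0 δ | (y : ℝ) - r ≤ (i : ℝ) ∧ (i : ℝ) ≤ (y : ℝ) + r}.ncard : ℝ) ∧
      ({i ∈ I0 δ | (y : ℝ) - r ≤ (i : ℝ) ∧ (i : ℝ) ≤ (y : ℝ) + r}.ncard : ℝ) ≤ C * r ^ δ := by
  classical
  have hx := two_lt_xx hδ0 hδ1
  have hc0pos : 0 < (xx δ - 2) / (xx δ - 1) := div_pos (by linarith) (by linarith)
  set c0 : ℝ := (xx δ - 2) / (xx δ - 1) with hc0def
  have hc2 : 0 < 2 / c0 := by positivity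
  set K : ℝ := 2 / c0 + 2 with hKdef
  have hK2 : 2 ≤ K := by rw [hKdef]; linarith
  have hc0ne : c0 ≠ 0 := ne_of_gt hc0pos
  have hKc0 : K * c0 = 2 + 2 * c0 := by
    rw [hKdef]; field_simp
  have hKpos : 0 < K := by linarith
  refine ⟨1/2, 2 * K ^ δ, by norm_num, by positivity, ?_⟩
  intro y hy r hr
  obtain ⟨sy, hsy0⟩ := hy
  have hsy : y = 1 + ∑ n ∈ sy, bb δ n := hsy0
  have hrpos : 0 < r := by linarith
  set S : Set ℕ := {i ∈ I0 δ | (y : ℝ) - r ≤ (i : ℝ) ∧ (i : ℝ) ≤ (y : ℝ) + r} with hSdef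
  -- ===== upper bound =====
  have hKr1 : 2 ≤ K * r := by nlinarith
  have hKrpos : 0 < K * r := by linarith
  set M : ℕ := ⌊Real.logb (xx δ) (K * r)⌋₊ + 1 with hMdef
  have hlogKr : 0 ≤ Real.logb (xx δ) (K * r) := Real.logb_nonneg (by linarith) (by linarith)
  have hM1 : K * r < (xx δ) ^ M := by
    have h1 : Real.logb (xx δ) (K * r) < (M : ℝ) := by
      rw [hMdef]; push_cast
      try exact Nat.lt_floor_add_one _
    calc K * r = (xx δ) ^ Real.logb (xx δ) (K * r) :=
          (Real.rpow_logb (by linarith) (by linarith) hKrpos).symm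
      _ < (xx δ) ^ (M : ℝ) := (Real.rpow_lt_rpow_left_iff (by linarith)).2 h1
      _ = (xx δ) ^ M := Real.rpow_natCast _ M
  have hM2 : (xx δ) ^ (M - 1) ≤ K * r := by
    have h1 : ((M - 1 : ℕ) : ℝ) ≤ Real.logb (xx δ) (K * r) := by
      rw [hMdef]
      simp only [Nat.add_sub_cancel]
      exact_mod_cast Nat.floor_le hlogKr
    calc (xx δ) ^ (M - 1) = (xx δ) ^ ((M - 1 : ℕ) : ℝ) := (Real.rpow_natCast _ _).symm
      _ ≤ (xx δ) ^ Real.logb (xx δ) (K * r) := (Real.rpow_le_rpow_left_iff (by linarith)).2 h1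
      _ = K * r := Real.rpow_logb (by linarith) (by linarith) hKrpos
  have hagree : ∀ t : Finset ℕ, |((1 + ∑ k ∈ t, bb δ k : ℕ) : ℝ) - (y : ℝ)| ≤ 2 * r →
      t \ Finset.range M = sy \ Finset.range M := by
    intro t hdist
    by_cases hts : t = sy
    · rw [hts]
    obtain ⟨n, hnu, hnmax⟩ := exists_max_diff hts
    have hnM : n < M := by
      by_contra hge
      push_neg at hge
      have hsep := sep hδ0 hδ1 hnu hnmax
      have heq : |((∑ k ∈ t, bb δ k : ℕ) : ℝ) - ((∑ k ∈ sy, bb δ k : ℕ) : ℝ)|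
          = |((1 + ∑ k ∈ t, bb δ k : ℕ) : ℝ) - (y : ℝ)| := by
        rw [hsy]; push_cast; ring_nf
      rw [heq] at hsep
      have hxn : (xx δ) ^ M ≤ (xx δ) ^ n := pow_le_pow_right₀ (by linarith) hge
      have h5 : ((xx δ) ^ n - 1) * c0 ≤ 2 * r := le_trans hsep hdist
      have h6 : (K * r - 1) * c0 ≤ 2 * r := by
        have := mul_lt_mul_of_pos_right (show K * r - 1 < (xx δ) ^ n - 1 by linarith) hc0pos
        linarith
      have h7 : c0 * 1 ≤ c0 * r := mul_le_mul_of_nonneg_left hr (le_of_lt hc0pos)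
      have h8 : K * c0 * r = (2 + 2 * c0) * r := by rw [hKc0]
      nlinarith
    ext m
    simp only [Finset.mem_sdiff, Finset.mem_range, not_lt]
    constructor
    · rintro ⟨hm1, hm2⟩
      exact ⟨(hnmax m (lt_of_lt_of_le hnM hm2)).1 hm1, hm2⟩
    · rintro ⟨hm1, hm2⟩
      exact ⟨(hnmax m (lt_of_lt_of_le hnM hm2)).2 hm1, hm2⟩
  have hsub : S ⊆ (fun u : Finset ℕ => 1 + ∑ k ∈ (sy \ Finset.range M) ∪ u, bb δ k) ''
      ↑(Finset.range M).powerset := by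
    rintro i ⟨hiI, hi1, hi2⟩
    obtain ⟨t, ht0⟩ := hiI
    have ht : i = 1 + ∑ k ∈ t, bb δ k := ht0
    have hdist : |((1 + ∑ k ∈ t, bb δ k : ℕ) : ℝ) - (y : ℝ)| ≤ 2 * r := by
      rw [← ht, abs_le]
      constructor <;> linarith
    have h9 := hagree t hdist
    refine ⟨t ∩ Finset.range M, by simp, ?_⟩
    simp only
    rw [← h9, Finset.sdiff_union_inter]
    exact ht.symm
  have hPfin : ((Finset.range M).powerset : Set (Finset ℕ)).Finite :=
    (Finset.range M).powerset.finite_toSet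
  have hSfin : S.Finite := (hPfin.image _).subset hsub
  have hcard_up : (S.ncard : ℝ) ≤ (2 : ℝ) ^ M := by
    have h1 : S.ncard ≤ _ := Set.ncard_le_ncard hsub (hPfin.image _)
    have h2 := Set.ncard_image_le (f := fun u : Finset ℕ =>
      1 + ∑ k ∈ (sy \ Finset.range M) ∪ u, bb δ k) hPfin
    have h3 : ((Finset.range M).powerset : Set (Finset ℕ)).ncard = 2 ^ M := by
      rw [Set.ncard_coe_finset, Finset.card_powerset, Finset.card_range]
    have h4 : S.ncard ≤ 2 ^ M := by omega
    exact_mod_cast h4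
  have hup : (S.ncard : ℝ) ≤ (2 * K ^ δ) * r ^ δ := by
    have hxpow : (0:ℝ) ≤ (xx δ) ^ (M - 1) := le_of_lt (pow_pos (by linarith) _)
    have hsplit : (2 : ℝ) ^ M = 2 * 2 ^ (M - 1) := by
      conv_lhs => rw [show M = (M - 1) + 1 by omega]
      rw [pow_succ]; ring
    have h1 : (2 : ℝ) ^ (M - 1) = ((xx δ) ^ (M - 1)) ^ δ := (two_pow_eq hδ0 (M - 1)).symm
    have h2 : ((xx δ) ^ (M - 1) : ℝ) ^ δ ≤ (K * r) ^ δ :=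
      Real.rpow_le_rpow hxpow hM2 (le_of_lt hδ0)
    have h3 : (K * r) ^ δ = K ^ δ * r ^ δ := Real.mul_rpow (by linarith) (by linarith)
    calc (S.ncard : ℝ) ≤ 2 ^ M := hcard_up
      _ = 2 * 2 ^ (M - 1) := hsplit
      _ = 2 * ((xx δ) ^ (M - 1)) ^ δ := by rw [h1]
      _ ≤ 2 * (K * r) ^ δ := by linarith
      _ = (2 * K ^ δ) * r ^ δ := by rw [h3]; ring
  -- ===== lower bound =====
  set N : ℕ := ⌊Real.logb (xx δ) r⌋₊ with hNdef
  have hlogr : 0 ≤ Real.logb (xx δ) r := Real.logb_nonneg (by linarith) hr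
  have hN1 : (xx δ) ^ N ≤ r := by
    have h1 : ((N : ℕ) : ℝ) ≤ Real.logb (xx δ) r := by
      rw [hNdef]; exact_mod_cast Nat.floor_le hlogr
    calc (xx δ) ^ N = (xx δ) ^ ((N : ℕ) : ℝ) := (Real.rpow_natCast _ _).symm
      _ ≤ (xx δ) ^ Real.logb (xx δ) r := (Real.rpow_le_rpow_left_iff (by linarith)).2 h1
      _ = r := Real.rpow_logb (by linarith) (by linarith) hrpos
  have hN2 : r ^ δ ≤ 2 * 2 ^ N := by
    have h1 : Real.logb (xx δ) r < ((N + 1 : ℕ) : ℝ) := by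
      rw [hNdef]; push_cast
      try exact Nat.lt_floor_add_one _
    have h2 : r ≤ (xx δ) ^ (N + 1) := by
      calc r = (xx δ) ^ Real.logb (xx δ) r :=
            (Real.rpow_logb (by linarith) (by linarith) hrpos).symm
        _ ≤ (xx δ) ^ ((N + 1 : ℕ) : ℝ) :=
            (Real.rpow_le_rpow_left_iff (by linarith)).2 (le_of_lt h1)
        _ = (xx δ) ^ (N + 1) := Real.rpow_natCast _ _
    calc r ^ δ ≤ ((xx δ) ^ (N + 1)) ^ δ := Real.rpow_le_rpow (by linarith) h2 (le_of_lt hδ0)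
      _ = 2 ^ (N + 1) := two_pow_eq hδ0 (N + 1)
      _ = 2 * 2 ^ N := by ring
  have hsumN : ∑ k ∈ Finset.range N, (bb δ k : ℝ) ≤ r := by
    have := sum_bb_le' hδ0 hδ1 N
    linarith
  have huni : ∀ v : Finset ℕ, v ⊆ Finset.range N →
      ((sy \ Finset.range N) ∪ v) ∩ Finset.range N = v := by
    intro v hv
    ext a
    simp only [Finset.mem_inter, Finset.mem_union, Finset.mem_sdiff]
    constructor
    · rintro ⟨h | h, h2⟩
      · exact absurd h2 h.2
      · exact h
    · intro ha
      exact ⟨Or.inr ha, hv ha⟩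
  have hTsub : (fun u : Finset ℕ => 1 + ∑ k ∈ (sy \ Finset.range N) ∪ u, bb δ k) ''
      ↑(Finset.range N).powerset ⊆ S := by
    rintro _ ⟨u, hu, rfl⟩
    have hu' : u ⊆ Finset.range N := Finset.mem_powerset.1 (Finset.mem_coe.1 hu)
    simp only
    have hdisj : Disjoint (sy \ Finset.range N) u := by
      rw [Finset.disjoint_left]
      intro a ha hau
      exact (Finset.mem_sdiff.1 ha).2 (hu' hau)
    have hA1 : ∑ k ∈ (sy \ Finset.range N) ∪ u, bb δ k ≤
        ∑ k ∈ sy \ Finset.range N, bb δ k + ∑ k ∈ Finset.range N, bb δ k := by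
      rw [Finset.sum_union hdisj]
      have := Finset.sum_le_sum_of_subset (f := bb δ) hu'
      omega
    have hA2 : ∑ k ∈ sy \ Finset.range N, bb δ k ≤
        ∑ k ∈ (sy \ Finset.range N) ∪ u, bb δ k :=
      Finset.sum_le_sum_of_subset Finset.subset_union_left
    have hy1 : ∑ k ∈ sy, bb δ k ≤
        ∑ k ∈ sy \ Finset.range N, bb δ k + ∑ k ∈ Finset.range N, bb δ k := by
      calc ∑ k ∈ sy, bb δ k ≤ ∑ k ∈ (sy \ Finset.range N) ∪ Finset.range N, bb δ k := by
            apply Finset.sum_le_sum_of_subset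
            intro a ha
            simp only [Finset.mem_union, Finset.mem_sdiff]
            by_cases h : a ∈ Finset.range N
            · exact Or.inr h
            · exact Or.inl ⟨ha, h⟩
        _ = _ := Finset.sum_union Finset.sdiff_disjoint
    have hy2 : ∑ k ∈ sy \ Finset.range N, bb δ k ≤ ∑ k ∈ sy, bb δ k :=
      Finset.sum_le_sum_of_subset Finset.sdiff_subset
    have hup' : 1 + ∑ k ∈ (sy \ Finset.range N) ∪ u, bb δ k ≤
        y + ∑ k ∈ Finset.range N, bb δ k := by omega
    have hlo' : y ≤ (1 + ∑ k ∈ (sy \ Finset.range N) ∪ u, bb δ k) +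
        ∑ k ∈ Finset.range N, bb δ k := by omega
    refine ⟨⟨(sy \ Finset.range N) ∪ u, rfl⟩, ?_, ?_⟩
    · have hc1 : (y : ℝ) ≤ ((1 + ∑ k ∈ (sy \ Finset.range N) ∪ u, bb δ k : ℕ) : ℝ) +
          ((∑ k ∈ Finset.range N, bb δ k : ℕ) : ℝ) := by exact_mod_cast hlo'
      push_cast at hc1 ⊢
      linarith
    · have hc2 : ((1 + ∑ k ∈ (sy \ Finset.range N) ∪ u, bb δ k : ℕ) : ℝ) ≤ (y : ℝ) +
          ((∑ k ∈ Finset.range N, bb δ k : ℕ) : ℝ) := by exact_mod_cast hup'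
      push_cast at hc2 ⊢
      linarith
  have hinj : Set.InjOn (fun u : Finset ℕ => 1 + ∑ k ∈ (sy \ Finset.range N) ∪ u, bb δ k)
      ↑(Finset.range N).powerset := by
    intro u hu u' hu' heq
    have hu1 : u ⊆ Finset.range N := Finset.mem_powerset.1 (Finset.mem_coe.1 hu)
    have hu2 : u' ⊆ Finset.range N := Finset.mem_powerset.1 (Finset.mem_coe.1 hu')
    simp only at heq
    have hsum : ∑ k ∈ (sy \ Finset.range N) ∪ u, bb δ k =
        ∑ k ∈ (sy \ Finset.range N) ∪ u', bb δ k := by omega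
    have hset := sum_inj hδ0 hδ1 hsum
    calc u = ((sy \ Finset.range N) ∪ u) ∩ Finset.range N := (huni u hu1).symm
      _ = ((sy \ Finset.range N) ∪ u') ∩ Finset.range N := by rw [hset]
      _ = u' := huni u' hu2
  have hTcard : ((fun u : Finset ℕ => 1 + ∑ k ∈ (sy \ Finset.range N) ∪ u, bb δ k) ''
      ↑(Finset.range N).powerset).ncard = 2 ^ N := by
    rw [Set.ncard_image_of_injOn hinj, Set.ncard_coe_finset,
      Finset.card_powerset, Finset.card_range]
  have hlow : (1/2) * r ^ δ ≤ (S.ncard : ℝ) := by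
    have h1 := Set.ncard_le_ncard hTsub hSfin
    rw [hTcard] at h1
    have h2 : ((2:ℕ) ^ N : ℝ) ≤ (S.ncard : ℝ) := by exact_mod_cast h1
    push_cast at h2
    linarith
  exact ⟨hlow, hup⟩
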